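/- Let d ≥ 5 be odd and p ∈ (0, 1/2). Then P(Bin(d-1, p) ≥ (d-1)/2) ≤ (1/2)·(1 + 1/√(d-1))·(4p(1-p))^((d-1)/2). -/

import Mathlib

lemma central_sq (m : ℕ) : (2*m+1) * (Nat.centralBinom m)^2 ≤ 16^m := by
  induction m with
  | zero => simp [Nat.centralBinom]
  | succ n ih =>
    have h := Nat.succ_mul_centralBinom_succ n
    have hs : ((n+1) * Nat.centralBinom (n+1))^2
        = (2*(2*n+1) * Nat.centralBinom n)^2 := by rw [h]
    have hs' : (n+1)^2 * (Nat.centralBinom (n+1))^2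
        = 4*(2*n+1)^2 * (Nat.centralBinom n)^2 := by
      rw [mul_pow] at hs; rw [hs]; ring
    have key : (n+1)^2 * ((2*(n+1)+1) * (Nat.centralBinom (n+1))^2)
        = (2*n+3) * (4*(2*n+1)) * ((2*n+1) * (Nat.centralBinom n)^2) := by
      calc (n+1)^2 * ((2*(n+1)+1) * (Nat.centralBinom (n+1))^2)
          = (2*n+3) * ((n+1)^2 * (Nat.centralBinom (n+1))^2) := by ring
        _ = (2*n+3) * (4*(2*n+1)^2 * (Nat.centralBinom n)^2) := by rw [hs']
        _ = (2*n+3) * (4*(2*n+1)) * ((2*n+1) * (Nat.centralBinom n)^2) := by ring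
    have h2 : (n+1)^2 * ((2*(n+1)+1) * (Nat.centralBinom (n+1))^2)
        ≤ (2*n+3) * (4*(2*n+1)) * 16^n := by
      rw [key]; exact Nat.mul_le_mul_left _ ih
    have h3 : (2*n+3) * (4*(2*n+1)) * 16^n ≤ (n+1)^2 * 16^(n+1) := by
      have hc : (2*n+3) * (4*(2*n+1)) ≤ (n+1)^2 * 16 := by nlinarith
      calc (2*n+3) * (4*(2*n+1)) * 16^n ≤ (n+1)^2 * 16 * 16^n :=
            Nat.mul_le_mul_right _ hc
        _ = (n+1)^2 * 16^(n+1) := by ring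
    exact Nat.le_of_mul_le_mul_left (le_trans h2 h3) (by positivity)

lemma sum_half (m : ℕ) :
    2 * ∑ k ∈ Finset.Icc m (2*m), (2*m).choose k = 2^(2*m) + (2*m).choose m := by
  have e1 : ∑ k ∈ Finset.Icc m (2*m), (2*m).choose k
      = ∑ j ∈ Finset.range (m+1), (2*m).choose (m+j) := by
    rw [← Finset.Ico_add_one_right_eq_Icc, Finset.sum_Ico_eq_sum_range]
    have : 2*m+1-m = m+1 := by omega
    rw [this]
  have sym : ∀ j ∈ Finset.range (m+1), (2*m).choose (m+j) = (2*m).choose (m-j) := by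
    intro j hj
    rw [Finset.mem_range] at hj
    rw [← Nat.choose_symm (by omega : m+j ≤ 2*m)]
    congr 1; omega
  have e2 : ∑ j ∈ Finset.range (m+1), (2*m).choose (m+j)
      = ∑ j ∈ Finset.range (m+1), (2*m).choose j := by
    rw [Finset.sum_congr rfl sym]
    have hr := Finset.sum_range_reflect (fun j => (2*m).choose j) (m+1)
    simpa using hr
  have hA : ∑ j ∈ Finset.range (m+1), (2*m).choose j
      = (∑ j ∈ Finset.range m, (2*m).choose j) + (2*m).choose m :=
    Finset.sum_range_succ _ m
  have hB : (2:ℕ)^(2*m) = (∑ j ∈ Finset.range m, (2*m).choose j)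
      + ∑ j ∈ Finset.range (m+1), (2*m).choose (m+j) := by
    have h1 := Nat.sum_range_choose (2*m)
    have h2 := Finset.sum_range_add (fun j => (2*m).choose j) m (m+1)
    have hmm : 2*m+1 = m + (m+1) := by omega
    rw [hmm] at h1
    rw [h2] at h1
    omega
  omega


/-- Tail probability of a binomial: P(Bin(n,p) ≥ m). -/
def binomTail (n m : ℕ) (p : ℝ) : ℝ :=
  ∑ k ∈ Finset.Icc m n, (n.choose k : ℝ) * p ^ k * (1 - p) ^ (n - k)

theorem stmt4 (d : ℕ) (hd : 5 ≤ d) (hodd : Odd d) (p : ℝ) (hp0 : 0 < p) (hp : p < 1 / 2) :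
    binomTail (d - 1) ((d - 1) / 2) p ≤
      (1 / 2) * (1 + 1 / Real.sqrt (d - 1)) * (4 * p * (1 - p)) ^ ((d - 1) / 2) := by
  obtain ⟨m, hm⟩ := hodd
  have hm2 : 2 ≤ m := by omega
  have h1 : d - 1 = 2*m := by omega
  have hcast : ((d:ℝ) - 1) = 2*(m:ℝ) := by subst hm; push_cast; ring
  rw [h1, hcast]
  have h2 : 2*m/2 = m := by omega
  rw [h2]
  unfold binomTail
  have hq : 0 < 1 - p := by linarith
  have hple : p ≤ 1 - p := by linarith
  set s := Real.sqrt (2*(m:ℝ)) with hs_def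
  have hs : 0 < s := Real.sqrt_pos.mpr (by positivity)
  -- termwise bound
  have step1 : ∀ k ∈ Finset.Icc m (2*m),
      ((2*m).choose k : ℝ) * p ^ k * (1 - p) ^ (2*m - k)
        ≤ ((2*m).choose k : ℝ) * (p ^ m * (1 - p) ^ m) := by
    intro k hk
    rw [Finset.mem_Icc] at hk
    have hpk : p ^ k * (1 - p) ^ (2*m - k) ≤ p ^ m * (1 - p) ^ m := by
      have e1 : p ^ k = p ^ m * p ^ (k - m) := by
        rw [← pow_add]; congr 1; omega
      have e2 : (1 - p) ^ m = (1 - p) ^ (2*m - k) * (1 - p) ^ (k - m) := by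
        rw [← pow_add]; congr 1; omega
      have hle : p ^ (k - m) ≤ (1 - p) ^ (k - m) :=
        pow_le_pow_left₀ hp0.le hple _
      calc p ^ k * (1 - p) ^ (2*m - k)
          = p ^ m * (1 - p) ^ (2*m - k) * p ^ (k - m) := by rw [e1]; ring
        _ ≤ p ^ m * (1 - p) ^ (2*m - k) * (1 - p) ^ (k - m) := by
            apply mul_le_mul_of_nonneg_left hle; positivity
        _ = p ^ m * (1 - p) ^ m := by rw [e2]; ring
    calc ((2*m).choose k : ℝ) * p ^ k * (1 - p) ^ (2*m - k)
        = ((2*m).choose k : ℝ) * (p ^ k * (1 - p) ^ (2*m - k)) := by ring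
      _ ≤ ((2*m).choose k : ℝ) * (p ^ m * (1 - p) ^ m) := by
          apply mul_le_mul_of_nonneg_left hpk; positivity
  have step2 : ∑ k ∈ Finset.Icc m (2*m), ((2*m).choose k : ℝ) * p ^ k * (1 - p) ^ (2*m - k)
      ≤ (∑ k ∈ Finset.Icc m (2*m), ((2*m).choose k : ℝ)) * (p ^ m * (1 - p) ^ m) := by
    rw [Finset.sum_mul]
    exact Finset.sum_le_sum step1
  -- value of the choose sum
  have hsum : 2 * (∑ k ∈ Finset.Icc m (2*m), ((2*m).choose k : ℝ))
      = 2^(2*m) + ((2*m).choose m : ℝ) := by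
    exact_mod_cast congrArg (Nat.cast : ℕ → ℝ) (sum_half m)
  -- central binomial bound
  have hCnat : 2*m * ((2*m).choose m)^2 ≤ 16^m := by
    have h := central_sq m
    have : Nat.centralBinom m = (2*m).choose m := rfl
    rw [this] at h
    exact le_trans (Nat.mul_le_mul_right _ (by omega)) h
  have hCreal : 2*(m:ℝ) * (((2*m).choose m : ℝ))^2 ≤ 16^m := by
    exact_mod_cast hCnat
  have hC : (((2*m).choose m : ℝ)) ≤ 4^m / s := by
    rw [le_div_iff₀ hs]
    have h1 : (((2*m).choose m : ℝ)) * s = Real.sqrt (2*(m:ℝ) * (((2*m).choose m : ℝ))^2) := by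
      rw [Real.sqrt_mul (by positivity), Real.sqrt_sq (by positivity)]
      ring
    rw [h1]
    calc Real.sqrt (2*(m:ℝ) * (((2*m).choose m : ℝ))^2)
        ≤ Real.sqrt ((16:ℝ)^m) := Real.sqrt_le_sqrt hCreal
      _ = 4^m := by
          rw [show (16:ℝ)^m = ((4:ℝ)^m)^2 by rw [← pow_mul, mul_comm m 2, pow_mul]; norm_num]
          exact Real.sqrt_sq (by positivity)
  have h4 : (2:ℝ)^(2*m) = 4^m := by
    rw [pow_mul]; norm_num
  have hS : (∑ k ∈ Finset.Icc m (2*m), ((2*m).choose k : ℝ))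
      ≤ ((4:ℝ)^m + 4^m/s)/2 := by
    nlinarith [hsum, hC, h4]
  calc ∑ k ∈ Finset.Icc m (2*m), ((2*m).choose k : ℝ) * p ^ k * (1 - p) ^ (2*m - k)
      ≤ (∑ k ∈ Finset.Icc m (2*m), ((2*m).choose k : ℝ)) * (p ^ m * (1 - p) ^ m) := step2
    _ ≤ (((4:ℝ)^m + 4^m/s)/2) * (p ^ m * (1 - p) ^ m) := by
        apply mul_le_mul_of_nonneg_right hS; positivity
    _ = (1/2) * (1 + 1/s) * (4*p*(1-p))^m := by
        rw [mul_pow, mul_pow]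
        field_simp
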